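/- For every integer n ≥ 3 and every real t ≠ 0, the moment-generating function of distance satisfies M(n,t) = (2n/(π(4+t²))) · ( 2(e^{tπ/n} − 1)/t + tan(π/n) · (e^{tπ/2} − e^{tπ/n}) ). -/

import Mathlib

open MeasureTheory

/-- The moment-generating function of distance on the homogeneous lens space `L(n;1)`,
expressed as an explicit integral over a fundamental domain in join coordinates. -/
noncomputable def mgfM (n : ℕ) (t : ℝ) : ℝ :=
  ((n : ℝ) ^ 2 / (2 * Real.pi ^ 2)) *
    ∫ θ₂ in (-(Real.pi / n))..(Real.pi / n),
      ∫ θ₁ in (-(Real.pi / n))..(Real.pi / n),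
        ∫ η in (0 : ℝ)..(Real.pi / 2),
          Real.exp (t * Real.arccos (Real.cos θ₁ * Real.cos η)) * Real.cos η * Real.sin η

noncomputable def H (t φ : ℝ) : ℝ :=
  Real.exp (t * φ) * (t * Real.sin (2 * φ) - 2 * Real.cos (2 * φ)) / (2 * (t ^ 2 + 4))

lemma hasDerivAt_H (t φ : ℝ) :
    HasDerivAt (H t) (Real.exp (t * φ) * Real.sin φ * Real.cos φ) φ := by
  have h4 : (2 * (t ^ 2 + 4) : ℝ) ≠ 0 := by positivity
  have hid : HasDerivAt (fun x : ℝ => t * x) t φ := by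
    simpa using (hasDerivAt_id φ).const_mul t
  have hid2 : HasDerivAt (fun x : ℝ => 2 * x) 2 φ := by
    simpa using (hasDerivAt_id φ).const_mul (2:ℝ)
  have he : HasDerivAt (fun x : ℝ => Real.exp (t * x)) (Real.exp (t * φ) * t) φ := hid.exp
  have hs : HasDerivAt (fun x : ℝ => Real.sin (2 * x)) (Real.cos (2 * φ) * 2) φ :=
    (Real.hasDerivAt_sin (2 * φ)).comp φ hid2
  have hc : HasDerivAt (fun x : ℝ => Real.cos (2 * x)) (-Real.sin (2 * φ) * 2) φ :=
    (Real.hasDerivAt_cos (2 * φ)).comp φ hid2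
  have hP : HasDerivAt
      (fun x : ℝ => Real.exp (t * x) * (t * Real.sin (2 * x) - 2 * Real.cos (2 * x)))
      (Real.exp (t * φ) * t * (t * Real.sin (2 * φ) - 2 * Real.cos (2 * φ)) +
        Real.exp (t * φ) * (t * (Real.cos (2 * φ) * 2) - 2 * (-Real.sin (2 * φ) * 2))) φ :=
    he.mul ((hs.const_mul t).sub (hc.const_mul 2))
  have := hP.div_const (2 * (t ^ 2 + 4))
  refine this.congr_deriv ?_
  rw [Real.sin_two_mul]
  field_simp
  ring

lemma inner_int (t : ℝ) {c : ℝ} (hc : 0 < c) (hc1 : c ≤ 1) :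
    ∫ η in (0:ℝ)..(Real.pi/2),
        Real.exp (t * Real.arccos (c * Real.cos η)) * Real.cos η * Real.sin η
      = (H t (Real.pi / 2) - H t (Real.arccos c)) / c ^ 2 := by
  have hle : (0:ℝ) ≤ Real.pi / 2 := by positivity
  have hHcont : Continuous (H t) := by
    unfold H; fun_prop
  have hGcont : ContinuousOn
      (fun η : ℝ => H t (Real.arccos (c * Real.cos η)) / c ^ 2) (Set.Icc 0 (Real.pi/2)) := by
    apply Continuous.continuousOn
    exact (hHcont.comp (Real.continuous_arccos.comp (continuous_const.mul Real.continuous_cos))).div_const _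
  have hfc : Continuous (fun η : ℝ =>
      Real.exp (t * Real.arccos (c * Real.cos η)) * Real.cos η * Real.sin η) :=
    (((Real.continuous_exp.comp
      (continuous_const.mul (Real.continuous_arccos.comp
        (continuous_const.mul Real.continuous_cos)))).mul Real.continuous_cos).mul
        Real.continuous_sin)
  have key := intervalIntegral.integral_eq_sub_of_hasDerivAt_of_le hle hGcont
    (f' := fun η => Real.exp (t * Real.arccos (c * Real.cos η)) * Real.cos η * Real.sin η)
    ?_ (hfc.intervalIntegrable _ _)
  · rw [key]
    simp [Real.cos_pi_div_two, Real.arccos_zero, Real.cos_zero, mul_zero, mul_one]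
    ring
  · intro η hη
    obtain ⟨hη0, hη2⟩ := hη
    have hcospos : 0 < Real.cos η := Real.cos_pos_of_mem_Ioo ⟨by linarith [Real.pi_pos], hη2⟩
    have hcoslt : Real.cos η < 1 := by
      have := Real.cos_lt_cos_of_nonneg_of_le_pi le_rfl (by linarith [Real.pi_pos]) hη0
      simpa using this
    set x := c * Real.cos η with hx
    have hx0 : 0 < x := mul_pos hc hcospos
    have hx1 : x < 1 := lt_of_le_of_lt (by nlinarith) hcoslt
    have hxne1 : x ≠ 1 := ne_of_lt hx1
    have hxnem1 : x ≠ -1 := by linarith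
    have hsq : 0 < 1 - x ^ 2 := by nlinarith
    have hrt : 0 < Real.sqrt (1 - x ^ 2) := Real.sqrt_pos.2 hsq
    have h1 : HasDerivAt (fun y : ℝ => c * Real.cos y) (c * -Real.sin η) η :=
      (Real.hasDerivAt_cos η).const_mul c
    have h2 : HasDerivAt Real.arccos (-(1 / Real.sqrt (1 - x ^ 2))) x :=
      Real.hasDerivAt_arccos hxnem1 hxne1
    have h3 : HasDerivAt (fun y : ℝ => Real.arccos (c * Real.cos y))
        (-(1 / Real.sqrt (1 - x ^ 2)) * (c * -Real.sin η)) η :=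
        HasDerivAt.comp (h₂ := Real.arccos) (h := fun y : ℝ => c * Real.cos y) η h2 h1
    have h4 := ((hasDerivAt_H t (Real.arccos x)).comp η h3).div_const (c ^ 2)
    refine h4.congr_deriv ?_
    rw [Real.sin_arccos, Real.cos_arccos (by linarith) (le_of_lt hx1)]
    rw [hx]
    field_simp
    ring_nf
    have hs : √(1 - c ^ 2 * Real.cos η ^ 2) ≠ 0 := by rw [← mul_pow, ← hx]; exact ne_of_gt hrt
    rw [mul_comm _ (Real.sin η), mul_assoc, mul_inv_cancel₀ hs, mul_one]

lemma half_int (t : ℝ) (ht : t ≠ 0) {a : ℝ} (ha0 : 0 ≤ a) (ha : a < Real.pi / 2) :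
    ∫ θ in (0:ℝ)..a, (H t (Real.pi / 2) - H t (Real.arccos (Real.cos θ))) / Real.cos θ ^ 2
      = (Real.exp (t * (Real.pi/2)) * Real.tan a - Real.exp (t * a) * Real.tan a
          + 2 * (Real.exp (t * a) - 1) / t) / (t ^ 2 + 4) := by
  have h4 : (t ^ 2 + 4 : ℝ) ≠ 0 := by positivity
  set K : ℝ → ℝ := fun θ =>
    (Real.exp (t * (Real.pi/2)) * Real.tan θ - Real.exp (t * θ) * Real.tan θ
      + 2 * Real.exp (t * θ) / t) / (t ^ 2 + 4) with hK
  have huIcc : Set.uIcc (0:ℝ) a = Set.Icc 0 a := Set.uIcc_of_le ha0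
  have hcosne : ∀ θ ∈ Set.Icc (0:ℝ) a, Real.cos θ ≠ 0 := by
    intro θ hθ
    exact ne_of_gt (Real.cos_pos_of_mem_Ioo ⟨by linarith [Real.pi_pos, hθ.1], lt_of_le_of_lt hθ.2 ha⟩)
  have hderiv : ∀ θ ∈ Set.uIcc (0:ℝ) a, HasDerivAt K
      ((H t (Real.pi / 2) - H t (Real.arccos (Real.cos θ))) / Real.cos θ ^ 2) θ := by
    intro θ hθ
    rw [huIcc] at hθ
    have hcθ : Real.cos θ ≠ 0 := hcosne θ hθ
    have hθπ : θ ≤ Real.pi := le_trans hθ.2 (by linarith [Real.pi_pos, ha])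
    have hid : HasDerivAt (fun x : ℝ => t * x) t θ := by
      simpa using (hasDerivAt_id θ).const_mul t
    have he : HasDerivAt (fun x : ℝ => Real.exp (t * x)) (Real.exp (t * θ) * t) θ := hid.exp
    have htan : HasDerivAt Real.tan (1 / Real.cos θ ^ 2) θ := Real.hasDerivAt_tan hcθ
    have hKd : HasDerivAt K
        ((Real.exp (t * (Real.pi/2)) * (1 / Real.cos θ ^ 2)
          - (Real.exp (t * θ) * t * Real.tan θ + Real.exp (t * θ) * (1 / Real.cos θ ^ 2))
          + 2 * (Real.exp (t * θ) * t) / t) / (t ^ 2 + 4)) θ := by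
      exact (((htan.const_mul _).sub (he.mul htan)).add ((he.const_mul 2).div_const t)).div_const _
    convert hKd using 1
    rw [Real.arccos_cos hθ.1 hθπ]
    unfold H
    rw [show (2:ℝ) * (Real.pi/2) = Real.pi by ring, Real.sin_pi, Real.cos_pi,
      Real.sin_two_mul, Real.cos_two_mul, Real.tan_eq_sin_div_cos]
    field_simp
    ring
  have hint : IntervalIntegrable
      (fun θ => (H t (Real.pi / 2) - H t (Real.arccos (Real.cos θ))) / Real.cos θ ^ 2)
      volume 0 a := by
    apply ContinuousOn.intervalIntegrable
    rw [huIcc]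
    apply ContinuousOn.div
    · exact Continuous.continuousOn (by
        have : Continuous (H t) := by unfold H; fun_prop
        exact continuous_const.sub (this.comp (Real.continuous_arccos.comp Real.continuous_cos)))
    · exact (Real.continuous_cos.pow 2).continuousOn
    · intro θ hθ; exact pow_ne_zero 2 (hcosne θ hθ)
  rw [intervalIntegral.integral_eq_sub_of_hasDerivAt hderiv hint]
  rw [hK]
  simp only [Real.tan_zero, mul_zero, Real.exp_zero]
  field_simp
  ring

lemma full_int (t : ℝ) (ht : t ≠ 0) {a : ℝ} (ha0 : 0 ≤ a) (ha : a < Real.pi / 2) :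
    ∫ θ in (-a)..a, (H t (Real.pi / 2) - H t (Real.arccos (Real.cos θ))) / Real.cos θ ^ 2
      = 2 * ((Real.exp (t * (Real.pi/2)) * Real.tan a - Real.exp (t * a) * Real.tan a
          + 2 * (Real.exp (t * a) - 1) / t) / (t ^ 2 + 4)) := by
  set F : ℝ → ℝ :=
    fun θ => (H t (Real.pi / 2) - H t (Real.arccos (Real.cos θ))) / Real.cos θ ^ 2 with hF
  have hFcont : ContinuousOn F (Set.Icc (-a) a) := by
    apply ContinuousOn.div
    · exact Continuous.continuousOn (by
        have : Continuous (H t) := by unfold H; fun_prop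
        exact continuous_const.sub (this.comp (Real.continuous_arccos.comp Real.continuous_cos)))
    · exact (Real.continuous_cos.pow 2).continuousOn
    · intro θ hθ
      refine pow_ne_zero 2 (ne_of_gt (Real.cos_pos_of_mem_Ioo ⟨?_, ?_⟩))
      · linarith [hθ.1]
      · exact lt_of_le_of_lt hθ.2 ha
  have hi1 : IntervalIntegrable F volume (-a) 0 := by
    apply ContinuousOn.intervalIntegrable
    apply hFcont.mono
    rw [Set.uIcc_of_le (by linarith : (-a:ℝ) ≤ 0)]
    exact Set.Icc_subset_Icc le_rfl ha0
  have hi2 : IntervalIntegrable F volume 0 a := by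
    apply ContinuousOn.intervalIntegrable
    apply hFcont.mono
    rw [Set.uIcc_of_le ha0]
    exact Set.Icc_subset_Icc (by linarith) le_rfl
  have hsplit := intervalIntegral.integral_add_adjacent_intervals hi1 hi2
  have heven : ∀ θ, F (-θ) = F θ := by
    intro θ; simp [hF, Real.cos_neg]
  have hleft : (∫ θ in (-a)..(0:ℝ), F θ) = ∫ θ in (0:ℝ)..a, F θ := by
    have := intervalIntegral.integral_comp_neg (a := (0:ℝ)) (b := a) (f := F)
    simp only [neg_zero] at this
    rw [← this]
    simp only [heven]
  rw [← hsplit, hleft, half_int t ht ha0 ha]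
  ring

theorem mgf_formula (n : ℕ) (hn : 3 ≤ n) (t : ℝ) (ht : t ≠ 0) :
    mgfM n t =
      (2 * n / (Real.pi * (4 + t ^ 2))) *
        ( 2 * (Real.exp (t * Real.pi / n) - 1) / t
          + Real.tan (Real.pi / n) *
              (Real.exp (t * Real.pi / 2) - Real.exp (t * Real.pi / n)) ) := by
  have hπ := Real.pi_pos
  have hn1 : (3:ℝ) ≤ (n:ℝ) := by exact_mod_cast hn
  have hn0 : (0:ℝ) < (n:ℝ) := by linarith
  set a : ℝ := Real.pi / n with haa
  have ha0 : 0 < a := by positivity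
  have ha : a < Real.pi / 2 := by
    rw [haa, div_lt_div_iff₀ hn0 (by norm_num)]
    nlinarith
  have hstep1 : ∀ θ₁ ∈ Set.uIcc (-a) a,
      (∫ η in (0:ℝ)..(Real.pi/2),
          Real.exp (t * Real.arccos (Real.cos θ₁ * Real.cos η)) * Real.cos η * Real.sin η)
        = (H t (Real.pi / 2) - H t (Real.arccos (Real.cos θ₁))) / Real.cos θ₁ ^ 2 := by
    intro θ₁ hθ₁
    rw [Set.uIcc_of_le (by linarith : (-a:ℝ) ≤ a)] at hθ₁
    have hcpos : 0 < Real.cos θ₁ :=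
      Real.cos_pos_of_mem_Ioo ⟨by linarith [hθ₁.1], lt_of_le_of_lt hθ₁.2 ha⟩
    exact inner_int t hcpos (Real.cos_le_one θ₁)
  have hmain : mgfM n t =
      ((n:ℝ) ^ 2 / (2 * Real.pi ^ 2)) * ((2 * a) *
        (2 * ((Real.exp (t * (Real.pi/2)) * Real.tan a - Real.exp (t * a) * Real.tan a
          + 2 * (Real.exp (t * a) - 1) / t) / (t ^ 2 + 4)))) := by
    unfold mgfM
    rw [intervalIntegral.integral_congr hstep1, full_int t ht (le_of_lt ha0) ha,
      intervalIntegral.integral_const]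
    rw [smul_eq_mul]
    rw [haa]
    ring_nf
  rw [hmain]
  have h4 : (t ^ 2 + 4 : ℝ) ≠ 0 := by positivity
  have hE1 : Real.exp (t * a) = Real.exp (t * Real.pi / n) := by rw [haa]; ring_nf
  have hE2 : Real.exp (t * (Real.pi / 2)) = Real.exp (t * Real.pi / 2) := by ring_nf
  rw [hE1, hE2, haa]
  field_simp
  ring
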